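/- Bias theorem: in the imprecise Monte Carlo setting, assume −∞ < E̲^∞(inf_{t∈T} f_t(X₁^P)). Then for every integer n ≥ 2: E̲^∞(Ê̲_{n−1}^𝒫(f)) ≤ E̲^∞(Ê̲_n^𝒫(f)) ≤ Ē^∞(Ê̲_n^𝒫(f)) ≤ E̲^𝒫(f). In particular the bias of the estimator (with respect to either inner or outer expectation) is non-positive, and the inner-expectation bias is non-decreasing in the sample size n. -/

import Mathlib

open MeasureTheory Filter Topology ProbabilityTheory
open scoped ENNReal

noncomputable section

/-- The positive part of an extended real number, as an element of `ℝ≥0∞`. -/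
def epos (x : EReal) : ℝ≥0∞ := if x = ⊤ then ⊤ else ENNReal.ofReal x.toReal

/-- The (possibly infinite) expectation `E(g) = ∫ g⁺ − ∫ g⁻` of an extended-real map. -/
def eExp {Ω : Type*} [MeasurableSpace Ω] (μ : Measure Ω) (g : Ω → EReal) : EReal :=
  ((∫⁻ ω, epos (g ω) ∂μ : ℝ≥0∞) : EReal) - ((∫⁻ ω, epos (-(g ω)) ∂μ : ℝ≥0∞) : EReal)

/-- `E(g)` exists: at least one of `E(g⁺)`, `E(g⁻)` is finite. -/
def eExpExists {Ω : Type*} [MeasurableSpace Ω] (μ : Measure Ω) (g : Ω → EReal) : Prop :=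
  (∫⁻ ω, epos (g ω) ∂μ) ≠ ⊤ ∨ (∫⁻ ω, epos (-(g ω)) ∂μ) ≠ ⊤

/-- Outer expectation of an arbitrary extended-real map: the infimum of `E(g)` over all
measurable `g ≥ h` whose expectation exists. -/
def outerExp {Ω : Type*} [MeasurableSpace Ω] (μ : Measure Ω) (h : Ω → EReal) : EReal :=
  sInf {y : EReal | ∃ g : Ω → EReal,
    Measurable g ∧ (∀ ω, h ω ≤ g ω) ∧ eExpExists μ g ∧ eExp μ g = y}

/-- Inner expectation of an arbitrary extended-real map. -/
def innerExp {Ω : Type*} [MeasurableSpace Ω] (μ : Measure Ω) (h : Ω → EReal) : EReal :=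
  - outerExp μ (fun ω => - h ω)

/-- `g` is a minimal measurable cover of `h` w.r.t. `μ`: it is measurable, dominates `h`
pointwise, and is a.s. below any measurable map dominating `h` pointwise. -/
def IsMinMeasCover {Ω : Type*} [MeasurableSpace Ω] (μ : Measure Ω) (h g : Ω → EReal) : Prop :=
  Measurable g ∧ (∀ ω, h ω ≤ g ω) ∧
    ∀ g' : Ω → EReal, Measurable g' → (∀ ω, h ω ≤ g' ω) → ∀ᵐ ω ∂μ, g ω ≤ g' ω

/-- Absolute value on extended reals. -/
def eabs (x : EReal) : EReal := max x (-x)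

/-! ### Auxiliary lemmas -/

lemma epos_coe (x : ℝ) : epos (x : EReal) = ENNReal.ofReal x := by simp [epos]

lemma epos_neg_coe (x : ℝ) : epos (-(x : EReal)) = ENNReal.ofReal (-x) := by
  rw [← EReal.coe_neg, epos_coe]

lemma epos_of_ne_top {x : EReal} (hx : x ≠ ⊤) : epos x = ENNReal.ofReal x.toReal := if_neg hx

lemma epos_mono {x y : EReal} (h : x ≤ y) : epos x ≤ epos y := by
  unfold epos
  rcases eq_or_ne y ⊤ with hy | hy
  · simp [hy]
  · rcases eq_or_ne x ⊤ with hx | hx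
    · exact absurd (top_le_iff.mp (hx ▸ h)) hy
    · simp only [hx, hy, if_false]
      rcases eq_or_ne x ⊥ with hxb | hxb
      · simp [hxb]
      · rcases eq_or_ne y ⊥ with hyb | hyb
        · simp [hyb, le_bot_iff.mp (hyb ▸ h)] at hxb
        · exact ENNReal.ofReal_le_ofReal (EReal.toReal_le_toReal h hxb hy)

lemma measurable_epos : Measurable epos := by
  unfold epos
  exact Measurable.ite (measurableSet_singleton _) measurable_const
    (ENNReal.measurable_ofReal.comp measurable_ereal_toReal)

lemma ennreal_coe_eq_real_coe {A : ℝ≥0∞} (h : A ≠ ⊤) : (A : EReal) = ((A.toReal : ℝ) : EReal) := by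
  rw [← ENNReal.ofReal_toReal h, EReal.coe_ennreal_ofReal]
  rw [max_eq_left ENNReal.toReal_nonneg, ENNReal.toReal_ofReal ENNReal.toReal_nonneg]

lemma ofReal_sum_le {ι : Type*} (s : Finset ι) (f : ι → ℝ) :
    ENNReal.ofReal (∑ i ∈ s, f i) ≤ ∑ i ∈ s, ENNReal.ofReal (f i) := by
  induction s using Finset.cons_induction with
  | empty => simp
  | cons a s ha ih =>
      rw [Finset.sum_cons, Finset.sum_cons]
      exact (ENNReal.ofReal_add_le).trans (add_le_add le_rfl ih)

lemma nnnorm_toReal_le_epos (x : EReal) : (‖x.toReal‖₊ : ℝ≥0∞) ≤ epos x + epos (-x) := by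
  induction x using EReal.rec with
  | bot => simp [EReal.toReal_bot]
  | top => simp [EReal.toReal_top]
  | coe x =>
      rw [EReal.toReal_coe, epos_coe, epos_neg_coe, ← enorm_eq_nnnorm, ← ofReal_norm,
        Real.norm_eq_abs]
      rcases abs_cases x with ⟨h1, _⟩ | ⟨h1, _⟩
      · rw [h1]; exact le_self_add
      · rw [h1]; exact le_add_self

section basic
variable {Ω : Type*} [MeasurableSpace Ω] {μ : Measure Ω}

lemma eExp_mono {g g' : Ω → EReal} (h : ∀ ω, g ω ≤ g' ω) : eExp μ g ≤ eExp μ g' := by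
  unfold eExp
  refine EReal.sub_le_sub ?_ ?_
  · exact EReal.coe_ennreal_le_coe_ennreal_iff.mpr
      (lintegral_mono fun ω => epos_mono (h ω))
  · exact EReal.coe_ennreal_le_coe_ennreal_iff.mpr
      (lintegral_mono fun ω => epos_mono (EReal.neg_le_neg_iff.mpr (h ω)))

lemma eExp_neg {g : Ω → EReal} (h : eExpExists μ g) :
    eExp μ (fun ω => -(g ω)) = - eExp μ g := by
  unfold eExp
  have hnn : (∫⁻ ω, epos (-(-(g ω))) ∂μ) = ∫⁻ ω, epos (g ω) ∂μ := by
    simp only [neg_neg]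
  rw [hnn]
  set A := ∫⁻ ω, epos (g ω) ∂μ with hA
  set B := ∫⁻ ω, epos (-(g ω)) ∂μ with hB
  rcases h with h | h
  · rcases eq_or_ne B ⊤ with hb | hb
    · rw [hb, ennreal_coe_eq_real_coe h, EReal.coe_ennreal_top]
      rw [EReal.top_sub_coe, sub_eq_add_neg, EReal.neg_top, EReal.add_bot, EReal.neg_bot]
    · rw [ennreal_coe_eq_real_coe h, ennreal_coe_eq_real_coe hb, ← EReal.coe_sub,
        ← EReal.coe_sub, ← EReal.coe_neg, neg_sub]
  · rcases eq_or_ne A ⊤ with ha | ha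
    · rw [ha, ennreal_coe_eq_real_coe h, EReal.coe_ennreal_top]
      rw [EReal.top_sub_coe, sub_eq_add_neg, EReal.neg_top, EReal.add_bot]
    · rw [ennreal_coe_eq_real_coe h, ennreal_coe_eq_real_coe ha, ← EReal.coe_sub,
        ← EReal.coe_sub, ← EReal.coe_neg, neg_sub]

lemma innerExp_le_outerExp (h : Ω → EReal) : innerExp μ h ≤ outerExp μ h := by
  unfold innerExp outerExp
  refine le_sInf fun z hz => ?_
  obtain ⟨g₂, hm₂, hd₂, he₂, rfl⟩ := hz
  rw [EReal.neg_le]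
  refine le_sInf fun y hy => ?_
  obtain ⟨g₁, hm₁, hd₁, he₁, rfl⟩ := hy
  calc -eExp μ g₂ = eExp μ (fun ω => -(g₂ ω)) := (eExp_neg he₂).symm
    _ ≤ eExp μ g₁ := eExp_mono fun ω =>
        le_trans (EReal.neg_le_neg_iff.mpr (hd₂ ω)) (hd₁ ω)

lemma lint_ofReal_ne_top {u : Ω → ℝ} (hu : Integrable u μ) :
    (∫⁻ ω, ENNReal.ofReal (u ω) ∂μ) ≠ ⊤ := by
  refine ne_of_lt (lt_of_le_of_lt (lintegral_mono fun ω => ?_) hu.2)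
  rw [← ofReal_norm, Real.norm_eq_abs]
  exact ENNReal.ofReal_le_ofReal (le_abs_self _)

lemma eExpExists_coe {u : Ω → ℝ} (hu : Integrable u μ) :
    eExpExists μ (fun ω => ((u ω : ℝ) : EReal)) := by
  left
  rw [lintegral_congr (fun ω => epos_coe (u ω))]
  exact lint_ofReal_ne_top hu

lemma eExp_coe {u : Ω → ℝ} (hu : Integrable u μ) :
    eExp μ (fun ω => ((u ω : ℝ) : EReal)) = ((∫ ω, u ω ∂μ : ℝ) : EReal) := by
  unfold eExp
  rw [lintegral_congr (fun ω => epos_coe (u ω)),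
    lintegral_congr (fun ω => epos_neg_coe (u ω)),
    ennreal_coe_eq_real_coe (lint_ofReal_ne_top hu),
    ennreal_coe_eq_real_coe (lint_ofReal_ne_top (u := fun ω => -u ω) hu.neg),
    ← EReal.coe_sub, integral_eq_lintegral_pos_part_sub_lintegral_neg_part hu]

lemma lint_epos_congr {g g' : Ω → EReal} (hae : g =ᵐ[μ] g') :
    ∫⁻ ω, epos (g ω) ∂μ = ∫⁻ ω, epos (g' ω) ∂μ :=
  lintegral_congr_ae (hae.mono fun ω h => by simp only [h])

lemma lint_epos_neg_congr {g g' : Ω → EReal} (hae : g =ᵐ[μ] g') :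
    ∫⁻ ω, epos (-(g ω)) ∂μ = ∫⁻ ω, epos (-(g' ω)) ∂μ :=
  lintegral_congr_ae (hae.mono fun ω h => by simp only [h])

lemma eExp_congr_ae {g g' : Ω → EReal} (hae : g =ᵐ[μ] g') : eExp μ g = eExp μ g' := by
  unfold eExp
  rw [lint_epos_congr hae, lint_epos_neg_congr hae]

end basic

/-! ### Deletion maps and exchangeability -/

def del (j k : ℕ) : ℕ := if k < j then k else k + 1

lemma del_injective (j : ℕ) : Function.Injective (del j) := by
  have h : StrictMono (del j) := by
    intro a b hab
    unfold del
    split <;> split <;> omega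
  exact h.injective

def delMap (j : ℕ) (ω : ℕ → ℝ) : ℕ → ℝ := fun k => ω (del j k)

lemma measurable_delMap (j : ℕ) : Measurable (delMap j) :=
  measurable_pi_lambda _ fun k => measurable_pi_apply _

lemma joint_law (μ : Measure (ℕ → ℝ)) [IsProbabilityMeasure μ] (P : Measure ℝ)
    [IsProbabilityMeasure P]
    (hmap : ∀ k : ℕ, μ.map (fun ω => ω k) = P)
    (hind : iIndepFun (m := fun _ : ℕ => (inferInstance : MeasurableSpace ℝ))
      (fun k (ω : ℕ → ℝ) => ω k) μ)
    {ι : Type*} [Fintype ι] (τ : ι → ℕ) (hτ : Function.Injective τ) :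
    μ.map (fun ω (i : ι) => ω (τ i)) = Measure.pi (fun _ : ι => P) := by
  classical
  refine (Measure.pi_eq fun s hs => ?_).symm
  set sets : ℕ → Set ℝ := fun m => if h : ∃ i, τ i = m then s h.choose else Set.univ with hsets
  have hsets_tau : ∀ i, sets (τ i) = s i := by
    intro i
    have h : ∃ i', τ i' = τ i := ⟨i, rfl⟩
    simp only [hsets, dif_pos h]
    rw [hτ h.choose_spec]
  have hsets_meas : ∀ m, MeasurableSet (sets m) := by
    intro m
    by_cases h : ∃ i, τ i = m
    · simp only [hsets, dif_pos h]; exact hs _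
    · simp only [hsets, dif_neg h]; exact MeasurableSet.univ
  have hpre : (fun ω (i : ι) => ω (τ i)) ⁻¹' (Set.univ.pi s)
      = ⋂ m ∈ Finset.image τ Finset.univ, (fun ω : ℕ → ℝ => ω m) ⁻¹' sets m := by
    ext ω
    simp only [Set.mem_preimage, Set.mem_pi, Set.mem_univ, forall_true_left, Set.mem_iInter,
      Finset.mem_image, Finset.mem_univ, true_and]
    constructor
    · rintro hω m ⟨i, rfl⟩
      rw [hsets_tau]
      exact hω i
    · intro hω i
      have := hω (τ i) ⟨i, rfl⟩
      rwa [hsets_tau] at this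
  rw [Measure.map_apply
    (show Measurable fun (ω : ℕ → ℝ) (i : ι) => ω (τ i) from
      measurable_pi_lambda _ fun i => measurable_pi_apply (τ i))
    (MeasurableSet.univ_pi hs), hpre,
    hind.measure_inter_preimage_eq_mul (Finset.image τ Finset.univ) (fun m _ => hsets_meas m),
    Finset.prod_image (fun a _ b _ h => hτ h)]
  refine Finset.prod_congr rfl fun i _ => ?_
  have hmA := Measure.map_apply (μ := μ) (measurable_pi_apply (τ i)) (hsets_meas (τ i))
  rw [hmap (τ i)] at hmA
  rw [← hmA, hsets_tau]

lemma map_delMap (μ : Measure (ℕ → ℝ)) [IsProbabilityMeasure μ] (P : Measure ℝ)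
    [IsProbabilityMeasure P]
    (hmap : ∀ k : ℕ, μ.map (fun ω => ω k) = P)
    (hind : iIndepFun (m := fun _ : ℕ => (inferInstance : MeasurableSpace ℝ))
      (fun k (ω : ℕ → ℝ) => ω k) μ)
    (j : ℕ) : μ.map (delMap j) = μ := by
  refine ext_of_generate_finite (measurableCylinders (fun _ : ℕ => ℝ))
    generateFrom_measurableCylinders.symm isPiSystem_measurableCylinders (fun t ht => ?_) ?_
  · obtain ⟨s, S, hS, rfl⟩ := (mem_measurableCylinders t).mp ht
    have h1 : delMap j ⁻¹' cylinder s S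
        = (fun (ω : ℕ → ℝ) (i : s) => ω (del j (i : ℕ))) ⁻¹' S := rfl
    have h2 : cylinder s S = (fun (ω : ℕ → ℝ) (i : s) => ω ((i : ℕ))) ⁻¹' S := rfl
    rw [Measure.map_apply (measurable_delMap j) (hS.cylinder), h1,
      ← Measure.map_apply
        (show Measurable fun (ω : ℕ → ℝ) (i : s) => ω (del j (i : ℕ)) from
          measurable_pi_lambda _ fun i => measurable_pi_apply _) hS,
      joint_law μ P hmap hind _ (fun a b hab => Subtype.coe_injective (del_injective j hab))]
    rw [h2, ← Measure.map_apply
        (show Measurable fun (ω : ℕ → ℝ) (i : s) => ω ((i : ℕ)) from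
          measurable_pi_lambda _ fun i => measurable_pi_apply _) hS,
      joint_law μ P hmap hind _ Subtype.coe_injective]
  · rw [Measure.map_apply (measurable_delMap j) MeasurableSet.univ]
    simp

theorem bias_of_imprecise_monte_carlo
    {T : Type*} [Nonempty T]
    (Pt : T → Measure ℝ) (hPt : ∀ t, IsProbabilityMeasure (Pt t))
    (P : Measure ℝ) [IsProbabilityMeasure P]
    (f : ℝ → ℝ) (hf : Measurable f)
    (hfint : ∀ t, Integrable f (Pt t))
    (hsup : BddAbove (Set.range fun t => ∫ x, |f x| ∂(Pt t)))
    (ft : T → ℝ → ℝ)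
    (hftm : ∀ t, Measurable (ft t)) (hfti : ∀ t, Integrable (ft t) P)
    (hfte : ∀ t, ∫ x, ft t x ∂P = ∫ x, f x ∂(Pt t))
    (hftea : ∀ t, ∫ x, |ft t x| ∂P = ∫ x, |f x| ∂(Pt t))
    -- the i.i.d. sample `X₁, X₂, …` with distribution `P`, on the product space
    (μ : Measure (ℕ → ℝ)) [IsProbabilityMeasure μ]
    (hmap : ∀ k : ℕ, μ.map (fun ω => ω k) = P)
    (hind : iIndepFun (m := fun _ : ℕ => (inferInstance : MeasurableSpace ℝ))
      (fun k (ω : ℕ → ℝ) => ω k) μ)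
    (hbase : (⊥ : EReal) < innerExp μ (fun ω => ⨅ t : T, ((ft t (ω 0) : ℝ) : EReal))) :
    ∀ n : ℕ, 2 ≤ n →
      innerExp μ
          (fun ω => ⨅ t : T, ((((n - 1 : ℕ) : ℝ)⁻¹ *
            ∑ k ∈ Finset.range (n - 1), ft t (ω k) : ℝ) : EReal)) ≤
        innerExp μ
          (fun ω => ⨅ t : T, (((n : ℝ)⁻¹ * ∑ k ∈ Finset.range n, ft t (ω k) : ℝ) : EReal)) ∧
      innerExp μ
          (fun ω => ⨅ t : T, (((n : ℝ)⁻¹ * ∑ k ∈ Finset.range n, ft t (ω k) : ℝ) : EReal)) ≤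
        outerExp μ
          (fun ω => ⨅ t : T, (((n : ℝ)⁻¹ * ∑ k ∈ Finset.range n, ft t (ω k) : ℝ) : EReal)) ∧
      outerExp μ
          (fun ω => ⨅ t : T, (((n : ℝ)⁻¹ * ∑ k ∈ Finset.range n, ft t (ω k) : ℝ) : EReal)) ≤
        ⨅ t : T, ((∫ x, f x ∂(Pt t) : ℝ) : EReal) := by
  intro n hn
  classical
  have hnR : (0 : ℝ) < (n : ℝ) := by
    have : 0 < n := by omega
    exact_mod_cast this
  have hmR : ((n - 1 : ℕ) : ℝ) = (n : ℝ) - 1 := by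
    rw [Nat.cast_sub (by omega : 1 ≤ n), Nat.cast_one]
  have hXmeas : ∀ k : ℕ, Measurable fun ω : ℕ → ℝ => ω k := fun k => measurable_pi_apply k
  have hXint : ∀ (t : T) (k : ℕ), Integrable (fun ω : ℕ → ℝ => ft t (ω k)) μ := by
    intro t k
    have h1 : Integrable (ft t) (μ.map (fun ω : ℕ → ℝ => ω k)) := by
      rw [hmap k]; exact hfti t
    exact (integrable_map_measure ((hftm t).aestronglyMeasurable) (hXmeas k).aemeasurable).mp h1
  have hXval : ∀ (t : T) (k : ℕ), ∫ ω, ft t (ω k) ∂μ = ∫ x, ft t x ∂P := by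
    intro t k
    have h1 := integral_map (hXmeas k).aemeasurable
      ((hftm t).aestronglyMeasurable (μ := μ.map (fun ω : ℕ → ℝ => ω k)))
    rw [hmap k] at h1
    exact h1.symm
  have hSnm : ∀ t : T, Measurable fun ω : ℕ → ℝ =>
      (n : ℝ)⁻¹ * ∑ k ∈ Finset.range n, ft t (ω k) :=
    fun t => (Finset.measurable_sum _ fun k _ => (hftm t).comp (hXmeas k)).const_mul _
  have hSnint : ∀ t : T, Integrable (fun ω : ℕ → ℝ =>
      (n : ℝ)⁻¹ * ∑ k ∈ Finset.range n, ft t (ω k)) μ :=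
    fun t => (integrable_finset_sum _ fun k _ => hXint t k).const_mul _
  have hSnval : ∀ t : T,
      ∫ ω, ((n : ℝ)⁻¹ * ∑ k ∈ Finset.range n, ft t (ω k)) ∂μ = ∫ x, f x ∂(Pt t) := by
    intro t
    rw [integral_const_mul, integral_finset_sum _ fun k _ => hXint t k]
    rw [Finset.sum_congr rfl fun k _ => hXval t k, Finset.sum_const, Finset.card_range,
      nsmul_eq_mul, ← mul_assoc, inv_mul_cancel₀ (ne_of_gt hnR), one_mul]
    exact hfte t
  refine ⟨?_, innerExp_le_outerExp _, ?_⟩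
  · -- Part 1 : monotonicity in n
    unfold innerExp
    rw [EReal.neg_le_neg_iff]
    unfold outerExp
    refine le_sInf fun y hy => ?_
    obtain ⟨g, hgm, hgd, hgex, rfl⟩ := hy
    have hgd' : ∀ (ω : ℕ → ℝ) (t : T),
        ((-(((n - 1 : ℕ) : ℝ)⁻¹ * ∑ k ∈ Finset.range (n - 1), ft t (ω k)) : ℝ) : EReal)
          ≤ g ω := by
      intro ω t
      rw [EReal.coe_neg]
      exact (EReal.neg_le_neg_iff.mpr (iInf_le _ t)).trans (hgd ω)
    have hgbot : ∀ ω, g ω ≠ ⊥ :=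
      fun ω => ((EReal.bot_lt_coe _).trans_le (hgd' ω (Classical.arbitrary T))).ne'
    set A := ∫⁻ ω, epos (g ω) ∂μ with hAdef
    set B := ∫⁻ ω, epos (-(g ω)) ∂μ with hBdef
    by_cases hA : A = ⊤
    · -- `eExp μ g = ⊤`
      have hB : B ≠ ⊤ := by
        rcases hgex with h | h
        · exact absurd hA h
        · exact h
      have htop : eExp μ g = ⊤ := by
        unfold eExp
        rw [← hAdef, ← hBdef, hA, EReal.coe_ennreal_top, ennreal_coe_eq_real_coe hB,
          EReal.top_sub_coe]
      rw [htop]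
      exact le_top
    · -- main case : positive part of the cover is integrable
      have hgtop_null : μ {ω | g ω = ⊤} = 0 := by
        have h1 := ae_lt_top (measurable_epos.comp hgm) hA
        rw [ae_iff] at h1
        refine measure_mono_null ?_ h1
        intro ω hω
        simp only [Set.mem_setOf_eq] at hω ⊢
        simp [epos, hω]
      have hgtop_meas : MeasurableSet {ω : ℕ → ℝ | g ω = ⊤} :=
        hgm (measurableSet_singleton _)
      have hdelnull : ∀ j : ℕ, μ (delMap j ⁻¹' {ω | g ω = ⊤}) = 0 := by
        intro j
        rw [← Measure.map_apply (measurable_delMap j) hgtop_meas,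
          map_delMap μ P hmap hind j]
        exact hgtop_null
      set E : Set (ℕ → ℝ) := ⋃ j ∈ Finset.range n, delMap j ⁻¹' {ω | g ω = ⊤} with hEdef
      have hEmeas : MeasurableSet E :=
        MeasurableSet.iUnion fun j => MeasurableSet.iUnion fun _ =>
          (measurable_delMap j) hgtop_meas
      have hEnull : μ E = 0 :=
        measure_iUnion_null fun j => measure_iUnion_null fun _ => hdelnull j
      have hoffE : ∀ ω, ω ∉ E → ∀ j ∈ Finset.range n, g (delMap j ω) ≠ ⊤ := by
        intro ω hω j hj hcon
        exact hω (Set.mem_iUnion₂.mpr ⟨j, hj, hcon⟩)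
      set r : (ℕ → ℝ) → ℝ := fun ω => (g ω).toReal with hrdef
      have hrm : Measurable r := measurable_ereal_toReal.comp hgm
      set u : (ℕ → ℝ) → ℝ :=
        fun ω => (n : ℝ)⁻¹ * ∑ j ∈ Finset.range n, r (delMap j ω) with hudef
      have hum : Measurable u :=
        (Finset.measurable_sum _ fun j _ => hrm.comp (measurable_delMap j)).const_mul _
      set G : (ℕ → ℝ) → EReal :=
        E.piecewise (fun _ => (⊤ : EReal)) (fun ω => ((u ω : ℝ) : EReal)) with hGdef
      have hGm : Measurable G :=
        Measurable.piecewise hEmeas measurable_const (measurable_coe_real_ereal.comp hum)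
      have hGae : G =ᵐ[μ] fun ω => ((u ω : ℝ) : EReal) := by
        have h1 : ∀ᵐ ω ∂μ, ω ∉ E := by
          rw [ae_iff]
          simpa [not_not] using hEnull
        exact h1.mono fun ω hω => Set.piecewise_eq_of_notMem _ _ _ hω
      -- key combinatorial identity
      have himg : ∀ j, j ∈ Finset.range n →
          Finset.image (del j) (Finset.range (n - 1)) = (Finset.range n).erase j := by
        intro j hj
        rw [Finset.mem_range] at hj
        ext x
        simp only [Finset.mem_image, Finset.mem_range, Finset.mem_erase]
        constructor
        · rintro ⟨k, hk, rfl⟩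
          unfold del
          split <;> omega
        · rintro ⟨hxj, hxn⟩
          by_cases hx : x < j
          · exact ⟨x, by omega, by unfold del; simp [hx]⟩
          · refine ⟨x - 1, by omega, ?_⟩
            unfold del
            split <;> omega
      have hdelsum : ∀ (a : ℕ → ℝ) (j : ℕ), j ∈ Finset.range n →
          ∑ k ∈ Finset.range (n - 1), a (del j k)
            = (∑ k ∈ Finset.range n, a k) - a j := by
        intro a j hj
        rw [← Finset.sum_image (g := del j) (f := a)
          (fun x _ y _ h => del_injective j h), himg j hj,
          Finset.sum_erase_eq_sub hj]
      have hkey : ∀ (t : T) (ω : ℕ → ℝ),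
          ∑ j ∈ Finset.range n,
              (-(((n - 1 : ℕ) : ℝ)⁻¹ * ∑ k ∈ Finset.range (n - 1), ft t (delMap j ω k)))
            = -(∑ k ∈ Finset.range n, ft t (ω k)) := by
        intro t ω
        have h1 : ∀ j ∈ Finset.range n,
            (-(((n - 1 : ℕ) : ℝ)⁻¹ * ∑ k ∈ Finset.range (n - 1), ft t (delMap j ω k)))
              = -(((n - 1 : ℕ) : ℝ)⁻¹)
                  * ((∑ k ∈ Finset.range n, ft t (ω k)) - ft t (ω j)) := by
          intro j hj
          rw [show (∑ k ∈ Finset.range (n - 1), ft t (delMap j ω k))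
              = ∑ k ∈ Finset.range (n - 1), (fun k' => ft t (ω k')) (del j k) from rfl,
            hdelsum (fun k' => ft t (ω k')) j hj]
          ring
        rw [Finset.sum_congr rfl h1, ← Finset.mul_sum, Finset.sum_sub_distrib,
          Finset.sum_const, Finset.card_range, nsmul_eq_mul, hmR]
        have hne : (n : ℝ) - 1 ≠ 0 := by
          have h2 : (2 : ℝ) ≤ (n : ℝ) := by exact_mod_cast hn
          linarith
        rw [show (n : ℝ) * (∑ k ∈ Finset.range n, ft t (ω k))
              - (∑ k ∈ Finset.range n, ft t (ω k))
            = ((n : ℝ) - 1) * (∑ k ∈ Finset.range n, ft t (ω k)) by ring,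
          neg_mul, inv_mul_cancel_left₀ hne]
      -- pointwise domination
      have hGd : ∀ ω : ℕ → ℝ,
          -(⨅ t : T, (((n : ℝ)⁻¹ * ∑ k ∈ Finset.range n, ft t (ω k) : ℝ) : EReal)) ≤ G ω := by
        intro ω
        by_cases hω : ω ∈ E
        · rw [hGdef, Set.piecewise_eq_of_mem _ _ _ hω]
          exact le_top
        · rw [hGdef, Set.piecewise_eq_of_notMem _ _ _ hω]
          rw [EReal.neg_le, ← EReal.coe_neg]
          refine le_iInf fun t => ?_
          rw [EReal.coe_le_coe_iff, neg_le]
          calc -((n : ℝ)⁻¹ * ∑ k ∈ Finset.range n, ft t (ω k))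
              = (n : ℝ)⁻¹ * ∑ j ∈ Finset.range n,
                  (-(((n - 1 : ℕ) : ℝ)⁻¹
                    * ∑ k ∈ Finset.range (n - 1), ft t (delMap j ω k))) := by
                rw [hkey t ω]; ring
            _ ≤ (n : ℝ)⁻¹ * ∑ j ∈ Finset.range n, r (delMap j ω) := by
                refine mul_le_mul_of_nonneg_left
                  (Finset.sum_le_sum fun j hj => ?_) (inv_nonneg.mpr hnR.le)
                have hne_top : g (delMap j ω) ≠ ⊤ := hoffE ω hω j hj
                have h3 := hgd' (delMap j ω) t
                rw [← EReal.coe_toReal hne_top (hgbot _)] at h3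
                exact EReal.coe_le_coe_iff.mp h3
            _ = u ω := rfl
      -- the positive part of `G` has finite integral
      have hAj : ∀ j : ℕ, ∫⁻ ω, epos (g (delMap j ω)) ∂μ = A := by
        intro j
        rw [← lintegral_map (show Measurable fun x => epos (g x) from
            measurable_epos.comp hgm) (measurable_delMap j),
          map_delMap μ P hmap hind j]
      have hGpos : (∫⁻ ω, epos (G ω) ∂μ) ≠ ⊤ := by
        rw [lint_epos_congr hGae, lintegral_congr fun ω => epos_coe (u ω)]
        have hb : ∀ᵐ ω ∂μ, ENNReal.ofReal (u ω)
            ≤ ENNReal.ofReal ((n : ℝ)⁻¹)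
                * ∑ j ∈ Finset.range n, epos (g (delMap j ω)) := by
          have h1 : ∀ᵐ ω ∂μ, ω ∉ E := by
            rw [ae_iff]; simpa [not_not] using hEnull
          refine h1.mono fun ω hω => ?_
          rw [hudef]
          rw [ENNReal.ofReal_mul (inv_nonneg.mpr hnR.le)]
          refine mul_le_mul' le_rfl ((ofReal_sum_le _ _).trans
            (Finset.sum_le_sum fun j hj => ?_))
          rw [epos_of_ne_top (hoffE ω hω j hj)]
        refine ne_of_lt (lt_of_le_of_lt (lintegral_mono_ae hb) ?_)
        rw [lintegral_const_mul _
            (show Measurable fun ω => ∑ j ∈ Finset.range n, epos (g (delMap j ω)) from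
              Finset.measurable_sum _ fun j _ =>
                show Measurable fun ω => epos (g (delMap j ω)) from
                  measurable_epos.comp (hgm.comp (measurable_delMap j))),
          lintegral_finset_sum _ fun j _ =>
            show Measurable fun ω => epos (g (delMap j ω)) from
              measurable_epos.comp (hgm.comp (measurable_delMap j))]
        simp only [hAj]
        exact ENNReal.mul_lt_top ENNReal.ofReal_lt_top
          (ENNReal.sum_lt_top.mpr fun j _ => lt_top_iff_ne_top.mpr hA)
      by_cases hB : B = ⊤
      · -- `eExp μ g = ⊥` so `eExp μ G = ⊥` suffices
        have hBj0 : ∫⁻ ω, epos (-(g (delMap 0 ω))) ∂μ = B := by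
          rw [← lintegral_map (show Measurable fun x => epos (-(g x)) from
              measurable_epos.comp ((continuous_neg.measurable).comp hgm))
              (measurable_delMap 0),
            map_delMap μ P hmap hind 0]
        have hn0 : (0 : ℕ) ∈ Finset.range n := Finset.mem_range.mpr (by omega)
        have hX : (∫⁻ ω, ENNReal.ofReal (-(u ω)) ∂μ) = ⊤ := by
          by_contra hX
          have hb : ∀ᵐ ω ∂μ, epos (-(g (delMap 0 ω)))
              ≤ ENNReal.ofReal (n : ℝ) * ENNReal.ofReal (-(u ω))
                  + ∑ j ∈ (Finset.range n).erase 0, epos (g (delMap j ω)) := by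
            have h1 : ∀ᵐ ω ∂μ, ω ∉ E := by
              rw [ae_iff]; simpa [not_not] using hEnull
            refine h1.mono fun ω hω => ?_
            have hr0 : -(r (delMap 0 ω)) = (n : ℝ) * (-(u ω))
                + ∑ j ∈ (Finset.range n).erase 0, r (delMap j ω) := by
              have h2 : (n : ℝ) * u ω = ∑ j ∈ Finset.range n, r (delMap j ω) := by
                rw [hudef, ← mul_assoc, mul_inv_cancel₀ (ne_of_gt hnR), one_mul]
              rw [← Finset.add_sum_erase _ _ hn0] at h2
              linarith
            have hnt : -(g (delMap 0 ω)) ≠ ⊤ :=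
              fun hcon => hgbot _ (EReal.neg_eq_top_iff.mp hcon)
            rw [epos_of_ne_top hnt, EReal.toReal_neg_eq, hr0]
            refine (ENNReal.ofReal_add_le).trans ?_
            refine add_le_add ?_ ((ofReal_sum_le _ _).trans
              (Finset.sum_le_sum fun j hj => ?_))
            · rw [ENNReal.ofReal_mul hnR.le]
            · rw [epos_of_ne_top (hoffE ω hω j (Finset.mem_of_mem_erase hj))]
          have hle := lintegral_mono_ae hb
          rw [hBj0] at hle
          rw [lintegral_add_left
              (show Measurable fun ω => ENNReal.ofReal (n : ℝ) * ENNReal.ofReal (-(u ω)) from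
                (show Measurable fun ω => ENNReal.ofReal (-(u ω)) from
                  ENNReal.measurable_ofReal.comp hum.neg).const_mul _),
            lintegral_const_mul _ (show Measurable fun ω => ENNReal.ofReal (-(u ω)) from
              ENNReal.measurable_ofReal.comp hum.neg),
            lintegral_finset_sum _ fun j _ =>
              show Measurable fun ω => epos (g (delMap j ω)) from
                measurable_epos.comp (hgm.comp (measurable_delMap j))] at hle
          simp only [hAj] at hle
          rw [hB] at hle
          have hfin : ENNReal.ofReal (n : ℝ) * (∫⁻ ω, ENNReal.ofReal (-(u ω)) ∂μ)
              + ∑ _j ∈ (Finset.range n).erase 0, A ≠ ⊤ :=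
            ENNReal.add_ne_top.mpr ⟨ENNReal.mul_ne_top ENNReal.ofReal_ne_top hX,
              (ENNReal.sum_lt_top.mpr fun j _ => lt_top_iff_ne_top.mpr hA).ne⟩
          exact hfin (top_le_iff.mp hle)
        have hGneg : (∫⁻ ω, epos (-(G ω)) ∂μ) = ⊤ := by
          rw [lint_epos_neg_congr hGae, lintegral_congr fun ω => epos_neg_coe (u ω)]
          exact hX
        have hGbot : eExp μ G = ⊥ := by
          unfold eExp
          rw [hGneg, EReal.coe_ennreal_top, ennreal_coe_eq_real_coe hGpos,
            sub_eq_add_neg, EReal.neg_top, EReal.add_bot]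
        refine le_trans (sInf_le ⟨G, hGm, hGd, Or.inl hGpos, rfl⟩) ?_
        rw [hGbot]
        exact bot_le
      · -- fully integrable case
        have hrint : Integrable r μ := by
          refine ⟨hrm.aestronglyMeasurable, ?_⟩
          have h1 : (∫⁻ ω, (‖r ω‖₊ : ℝ≥0∞) ∂μ) ≤ A + B := by
            refine le_trans (lintegral_mono fun ω => nnnorm_toReal_le_epos (g ω)) ?_
            rw [lintegral_add_left (show Measurable fun ω => epos (g ω) from
              measurable_epos.comp hgm)]
          exact lt_of_le_of_lt h1 (ENNReal.add_lt_top.mpr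
            ⟨lt_top_iff_ne_top.mpr hA, lt_top_iff_ne_top.mpr hB⟩)
        have hrdint : ∀ j : ℕ, Integrable (fun ω => r (delMap j ω)) μ := by
          intro j
          have h1 : Integrable r (μ.map (delMap j)) := by
            rw [map_delMap μ P hmap hind j]; exact hrint
          exact (integrable_map_measure hrm.aestronglyMeasurable
            (measurable_delMap j).aemeasurable).mp h1
        have hrdval : ∀ j : ℕ, ∫ ω, r (delMap j ω) ∂μ = ∫ ω, r ω ∂μ := by
          intro j
          have h1 := integral_map (measurable_delMap j).aemeasurable
            (hrm.aestronglyMeasurable (μ := μ.map (delMap j)))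
          rw [map_delMap μ P hmap hind j] at h1
          exact h1.symm
        have huint : Integrable u μ :=
          (integrable_finset_sum _ fun j _ => hrdint j).const_mul _
        have huval : ∫ ω, u ω ∂μ = ∫ ω, r ω ∂μ := by
          rw [hudef]
          rw [integral_const_mul, integral_finset_sum _ fun j _ => hrdint j,
            Finset.sum_congr rfl fun j _ => hrdval j, Finset.sum_const, Finset.card_range,
            nsmul_eq_mul, ← mul_assoc, inv_mul_cancel₀ (ne_of_gt hnR), one_mul]
        have hae_top : ∀ᵐ ω ∂μ, g ω ≠ ⊤ := by
          rw [ae_iff]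
          simpa [not_not] using hgtop_null
        have hposR : ∫⁻ ω, epos (g ω) ∂μ = ∫⁻ ω, ENNReal.ofReal (r ω) ∂μ :=
          lintegral_congr_ae (hae_top.mono fun ω hω => by
            show epos (g ω) = ENNReal.ofReal (r ω)
            rw [epos_of_ne_top hω])
        have hnegR : ∫⁻ ω, epos (-(g ω)) ∂μ = ∫⁻ ω, ENNReal.ofReal (-(r ω)) ∂μ := by
          refine lintegral_congr fun ω => ?_
          have hnt : -(g ω) ≠ ⊤ :=
            fun hcon => hgbot _ (EReal.neg_eq_top_iff.mp hcon)
          rw [epos_of_ne_top hnt, EReal.toReal_neg_eq]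
        have hgval : eExp μ g = ((∫ ω, r ω ∂μ : ℝ) : EReal) := by
          unfold eExp
          rw [hposR, hnegR, ennreal_coe_eq_real_coe (hposR ▸ hA),
            ennreal_coe_eq_real_coe (hnegR ▸ hB), ← EReal.coe_sub,
            integral_eq_lintegral_pos_part_sub_lintegral_neg_part hrint]
        have hGval : eExp μ G = ((∫ ω, u ω ∂μ : ℝ) : EReal) := by
          rw [eExp_congr_ae hGae, eExp_coe huint]
        refine le_trans (sInf_le ⟨G, hGm, hGd, Or.inl hGpos, rfl⟩) ?_
        rw [hGval, hgval, huval]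
  · -- Part 3 : upper bound by the lower expectation
    refine le_iInf fun t => ?_
    unfold outerExp
    refine sInf_le ⟨fun ω => (((n : ℝ)⁻¹ * ∑ k ∈ Finset.range n, ft t (ω k) : ℝ) : EReal),
      measurable_coe_real_ereal.comp (hSnm t), fun ω => iInf_le _ t,
      eExpExists_coe (hSnint t), ?_⟩
    rw [eExp_coe (hSnint t), hSnval t]
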